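/- Let u be the multiplicative function defined by u = μ^(e) * λ * E₂ (Dirichlet convolutions), where λ is the Liouville function and E₂ is the characteristic function of perfect squares. Then u(p) = u(p²) = u(p³) = u(p⁴) = 0 for every prime p, and |u(p^b)| < b² for every prime power p^b with b ≥ 5. -/

import Mathlib

open Nat ArithmeticFunction Finset
open scoped Classical

/-- `μ^(e)` as an arithmetic function. -/
noncomputable def muE : ArithmeticFunction ℤ :=
  ⟨fun n => if n = 0 then 0 else ∏ p ∈ n.primeFactors, moebius (n.factorization p),
    by simp⟩

/-- The Liouville function `λ(n) = (-1)^{Ω(n)}`. -/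
noncomputable def lam : ArithmeticFunction ℤ :=
  ⟨fun n => if n = 0 then 0 else (-1) ^ cardFactors n, by simp⟩

/-- The characteristic function of perfect squares. -/
noncomputable def E2 : ArithmeticFunction ℤ :=
  ⟨fun n => if n ≠ 0 ∧ IsSquare n then 1 else 0, by simp⟩

lemma mul_apply_prime_pow (f g : ArithmeticFunction ℤ) {p : ℕ} (hp : p.Prime) (b : ℕ) :
    (f * g) (p ^ b) = ∑ i ∈ range (b + 1), f (p ^ i) * g (p ^ (b - i)) := by
  rw [ArithmeticFunction.mul_apply]
  rw [show (∑ x ∈ (p ^ b).divisorsAntidiagonal, f x.1 * g x.2) =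
      ∑ x ∈ (p ^ b).divisorsAntidiagonal, (fun a c => f a * g c) x.1 x.2 from rfl,
    Nat.sum_divisorsAntidiagonal (fun a c => f a * g c)]
  rw [Nat.sum_divisors_prime_pow hp]
  refine Finset.sum_congr rfl fun i hi => ?_
  rw [mem_range, Nat.lt_succ_iff] at hi
  rw [Nat.pow_div hi hp.pos]

lemma muE_prime_pow {p : ℕ} (hp : p.Prime) (i : ℕ) :
    muE (p ^ i) = if i = 0 then 1 else moebius i := by
  rcases Nat.eq_zero_or_pos i with rfl | hi
  · simp [muE]
  · have h0 : p ^ i ≠ 0 := (pow_pos hp.pos i).ne'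
    have hpf : (p ^ i).primeFactors = {p} :=
      Nat.primeFactors_prime_pow hi.ne' hp
    simp only [muE, ArithmeticFunction.coe_mk, h0, if_neg, hpf, Finset.prod_singleton,
      Nat.factorization_pow, Finsupp.smul_apply, hp.factorization_self]
    simp [hi.ne']

lemma lam_prime_pow {p : ℕ} (hp : p.Prime) (i : ℕ) :
    lam (p ^ i) = (-1) ^ i := by
  have h0 : p ^ i ≠ 0 := (pow_pos hp.pos i).ne'
  simp [lam, h0, cardFactors_apply_prime_pow hp, hp.ne_zero]

lemma isSquare_prime_pow_iff {p : ℕ} (hp : p.Prime) (i : ℕ) :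
    IsSquare (p ^ i) ↔ Even i := by
  constructor
  · rintro ⟨r, hr⟩
    have hr0 : r ≠ 0 := by
      rintro rfl
      exact (pow_pos hp.pos i).ne' (by simpa using hr)
    have := congrArg (fun n => n.factorization p) hr
    simp only [Nat.factorization_pow, Finsupp.smul_apply, hp.factorization_self,
      Nat.factorization_mul hr0 hr0, Finsupp.add_apply, smul_eq_mul, mul_one] at this
    exact ⟨r.factorization p, this⟩
  · intro h
    exact h.isSquare_pow p

lemma E2_prime_pow {p : ℕ} (hp : p.Prime) (i : ℕ) :
    E2 (p ^ i) = if Even i then 1 else 0 := by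
  have h0 : p ^ i ≠ 0 := (pow_pos hp.pos i).ne'
  simp [E2, h0, isSquare_prime_pow_iff hp, hp.ne_zero]

lemma muE_abs_le {p : ℕ} (hp : p.Prime) (i : ℕ) : |muE (p ^ i)| ≤ 1 := by
  rw [muE_prime_pow hp]
  split
  · norm_num
  · rw [abs_moebius]
    split <;> norm_num

lemma sum_aux (b : ℕ) : ∑ i ∈ range (b + 1), ((i : ℤ) + 1) * 2 = ((b : ℤ) + 1) * ((b : ℤ) + 2) := by
  induction b with
  | zero => norm_num
  | succ n ih =>
    rw [Finset.sum_range_succ, ih]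
    push_cast
    ring

lemma ml_abs_le {p : ℕ} (hp : p.Prime) (i : ℕ) :
    |(muE * lam) (p ^ i)| ≤ (i : ℤ) + 1 := by
  rw [mul_apply_prime_pow muE lam hp]
  calc |∑ k ∈ range (i + 1), muE (p ^ k) * lam (p ^ (i - k))|
      ≤ ∑ k ∈ range (i + 1), |muE (p ^ k) * lam (p ^ (i - k))| :=
        Finset.abs_sum_le_sum_abs _ _
    _ ≤ ∑ k ∈ range (i + 1), 1 := by
        refine Finset.sum_le_sum fun k _ => ?_
        rw [abs_mul, lam_prime_pow hp, abs_pow, abs_neg, abs_one, one_pow, mul_one]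
        exact muE_abs_le hp k
    _ = (i : ℤ) + 1 := by simp
  
theorem u_prime_power_values (p : ℕ) (hp : p.Prime) :
    ((muE * lam * E2) p = 0 ∧ (muE * lam * E2) (p ^ 2) = 0 ∧
      (muE * lam * E2) (p ^ 3) = 0 ∧ (muE * lam * E2) (p ^ 4) = 0) ∧
      ∀ b : ℕ, 5 ≤ b → |(muE * lam * E2) (p ^ b)| < (b : ℤ) ^ 2 := by
  have key : ∀ b : ℕ, (muE * lam * E2) (p ^ b) =
      ∑ i ∈ range (b + 1),
        (∑ k ∈ range (i + 1), (if k = 0 then 1 else moebius k) * (-1) ^ (i - k)) *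
          (if Even (b - i) then 1 else 0) := by
    intro b
    rw [mul_apply_prime_pow (muE * lam) E2 hp]
    refine Finset.sum_congr rfl fun i _ => ?_
    rw [mul_apply_prime_pow muE lam hp, E2_prime_pow hp]
    congr 1
    exact Finset.sum_congr rfl fun k _ => by
      rw [muE_prime_pow hp, lam_prime_pow hp]
  constructor
  · refine ⟨?_, ?_, ?_, ?_⟩
    · have := key 1
      rw [pow_one] at this
      rw [this]
      simp [Finset.sum_range_succ, moebius_apply_one]
    · rw [key 2]
      simp [Finset.sum_range_succ, moebius_apply_one, moebius_apply_prime Nat.prime_two]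
      all_goals decide
    · rw [key 3]
      have h3 : (moebius 3 : ℤ) = -1 := moebius_apply_prime (by norm_num)
      simp [Finset.sum_range_succ, moebius_apply_one, moebius_apply_prime Nat.prime_two, h3]
      all_goals decide
    · rw [key 4]
      have h3 : (moebius 3 : ℤ) = -1 := moebius_apply_prime (by norm_num)
      have h4 : (moebius 4 : ℤ) = 0 := by
        rw [show (4 : ℕ) = 2 ^ 2 from rfl, moebius_apply_prime_pow Nat.prime_two (by norm_num)]
        norm_num
      simp [Finset.sum_range_succ, moebius_apply_one, moebius_apply_prime Nat.prime_two, h3, h4]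
      all_goals decide
  · intro b hb
    rw [mul_apply_prime_pow (muE * lam) E2 hp]
    have hbound : |∑ i ∈ range (b + 1), (muE * lam) (p ^ i) * E2 (p ^ (b - i))| ≤
        ∑ i ∈ range (b + 1), ((i : ℤ) + 1) := by
      calc |∑ i ∈ range (b + 1), (muE * lam) (p ^ i) * E2 (p ^ (b - i))|
          ≤ ∑ i ∈ range (b + 1), |(muE * lam) (p ^ i) * E2 (p ^ (b - i))| :=
            Finset.abs_sum_le_sum_abs _ _
        _ ≤ ∑ i ∈ range (b + 1), ((i : ℤ) + 1) := by
            refine Finset.sum_le_sum fun i _ => ?_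
            rw [abs_mul, E2_prime_pow hp]
            rcases le_or_gt |(if Even (b - i) then (1:ℤ) else 0)| 1 with h | h
            · calc |(muE * lam) (p ^ i)| * |(if Even (b - i) then (1:ℤ) else 0)|
                  ≤ |(muE * lam) (p ^ i)| * 1 := by
                    exact mul_le_mul_of_nonneg_left h (abs_nonneg _)
                _ = |(muE * lam) (p ^ i)| := mul_one _
                _ ≤ (i : ℤ) + 1 := ml_abs_le hp i
            · exfalso
              split at h <;> simp at h <;> omega
    have hsum := sum_aux b
    have hsum' : ∑ i ∈ range (b + 1), ((i : ℤ) + 1) * 2 =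
        (∑ i ∈ range (b + 1), ((i : ℤ) + 1)) * 2 := by
      rw [Finset.sum_mul]
    have hb5 : (5 : ℤ) ≤ (b : ℤ) := by exact_mod_cast hb
    nlinarith [hbound, hsum, hsum']
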